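/- Let k ≥ 1 and let r, ρ > 0. Let g : ℂ^k → ℂ^k be holomorphic on the open ball B(0,r), with g(0) = 0 and ‖g(u)‖ ≤ ρ for every u ∈ B(0,r). Then for every u with ‖u‖ < r one has ‖g(u) − (D₀g)(u)‖ ≤ ρ · (‖u‖/r)² / (1 − ‖u‖/r), where D₀g denotes the Fréchet derivative of g at 0. -/

import Mathlib

open Metric

theorem stmt_0 (k : ℕ) (hk : 1 ≤ k) (r ρ : ℝ) (hr : 0 < r) (hρ : 0 < ρ)
    (g : EuclideanSpace ℂ (Fin k) → EuclideanSpace ℂ (Fin k))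
    (hg : ∀ u ∈ ball (0 : EuclideanSpace ℂ (Fin k)) r, DifferentiableAt ℂ g u)
    (hg0 : g 0 = 0)
    (hbd : ∀ u ∈ ball (0 : EuclideanSpace ℂ (Fin k)) r, ‖g u‖ ≤ ρ) :
    ∀ u : EuclideanSpace ℂ (Fin k), ‖u‖ < r →
      ‖g u - fderiv ℂ g 0 u‖ ≤ ρ * (‖u‖ / r) ^ 2 / (1 - ‖u‖ / r) := by
  intro u hu
  rcases eq_or_ne u 0 with rfl | hu0
  · rw [hg0, map_zero, sub_zero, norm_zero]
    simp
  have hnu : 0 < ‖u‖ := norm_pos_iff.2 hu0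
  set t : ℝ := ‖u‖ / r with ht
  have ht0 : 0 < t := div_pos hnu hr
  have ht1 : t < 1 := (div_lt_one hr).2 hu
  -- the one-variable slice
  set h : ℂ → EuclideanSpace ℂ (Fin k) := fun z => g (z • u) with hh
  have key : ∀ s ∈ Set.Ioo t 1, ‖g u - fderiv ℂ g 0 u‖ ≤ ρ * s ^ 2 / (1 - s) := by
    intro s hs
    obtain ⟨hts, hs1⟩ := hs
    have hs0 : 0 < s := ht0.trans hts
    set R : ℝ := s⁻¹ with hR
    have hR0 : 0 < R := inv_pos.2 hs0
    have hR1 : 1 < R := (one_lt_inv₀ hs0).2 hs1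
    have hRr : R * ‖u‖ < r := by
      rw [← lt_div_iff₀ hnu]
      calc R < t⁻¹ := by
              rw [hR]
              exact (inv_lt_inv₀ hs0 ht0).2 hts
        _ = r / ‖u‖ := by rw [ht]; field_simp
    have hmem : ∀ z : ℂ, ‖z‖ ≤ R → z • u ∈ ball (0 : EuclideanSpace ℂ (Fin k)) r := by
      intro z hz
      rw [mem_ball_zero_iff, norm_smul]
      calc ‖z‖ * ‖u‖ ≤ R * ‖u‖ := by gcongr
        _ < r := hRr
    set R₀ : NNReal := Real.toNNReal R with hR₀
    have hR₀R : (R₀ : ℝ) = R := Real.coe_toNNReal R hR0.le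
    have hdiff : DifferentiableOn ℂ h (closedBall (0 : ℂ) R₀) := by
      intro z hz
      rw [mem_closedBall_zero_iff, hR₀R] at hz
      exact ((hg _ (hmem z hz)).comp z (differentiableAt_id.smul_const u)).differentiableWithinAt
    have hR₀0 : 0 < R₀ := Real.toNNReal_pos.2 hR0
    have hps : HasFPowerSeriesOnBall h (cauchyPowerSeries h 0 R₀) 0 R₀ :=
      hdiff.hasFPowerSeriesOnBall hR₀0
    set p : FormalMultilinearSeries ℂ ℂ (EuclideanSpace ℂ (Fin k)) := cauchyPowerSeries h 0 R₀
    -- coefficient bounds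
    have hcoeff : ∀ n : ℕ, ‖p.coeff n‖ ≤ ρ * s ^ n := by
      intro n
      have h1 : ‖p.coeff n‖ ≤ ‖p n‖ := by
        calc ‖p.coeff n‖ = ‖p n fun _ => (1 : ℂ)‖ := rfl
          _ ≤ ‖p n‖ * ∏ _i : Fin n, ‖(1 : ℂ)‖ := (p n).le_opNorm _
          _ = ‖p n‖ := by simp
      have hint : ∀ θ : ℝ, ‖h (circleMap 0 (R₀ : ℝ) θ)‖ ≤ ρ := by
        intro θ
        apply hbd
        apply hmem
        rw [norm_circleMap_zero, hR₀R, abs_of_pos hR0]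
      have hcont : ContinuousOn (fun θ : ℝ => ‖h (circleMap 0 (R₀ : ℝ) θ)‖)
          (Set.uIcc 0 (2 * Real.pi)) := by
        apply ContinuousOn.norm
        apply hdiff.continuousOn.comp (continuous_circleMap 0 _).continuousOn
        intro θ _
        rw [mem_closedBall_zero_iff, norm_circleMap_zero,
          abs_of_nonneg R₀.coe_nonneg]
      have hInt : (∫ θ : ℝ in (0)..(2 * Real.pi), ‖h (circleMap 0 (R₀ : ℝ) θ)‖)
          ≤ 2 * Real.pi * ρ := by
        calc (∫ θ : ℝ in (0)..(2 * Real.pi), ‖h (circleMap 0 (R₀ : ℝ) θ)‖)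
            ≤ ∫ _θ : ℝ in (0)..(2 * Real.pi), ρ := by
              apply intervalIntegral.integral_mono_on Real.two_pi_pos.le
                (hcont.intervalIntegrable) intervalIntegrable_const
              intro θ _
              exact hint θ
          _ = 2 * Real.pi * ρ := by simp [smul_eq_mul]
      have h2 := norm_cauchyPowerSeries_le h 0 (R₀ : ℝ) n
      have h3 : ((2 * Real.pi)⁻¹ * ∫ θ : ℝ in (0)..(2 * Real.pi),
          ‖h (circleMap 0 (R₀ : ℝ) θ)‖) * |(R₀ : ℝ)|⁻¹ ^ n ≤ ρ * s ^ n := by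
        have habs : |(R₀ : ℝ)|⁻¹ = s := by
          rw [hR₀R, abs_of_pos hR0, hR, inv_inv]
        rw [habs]
        apply mul_le_mul_of_nonneg_right _ (pow_nonneg hs0.le n)
        rw [inv_mul_le_iff₀ Real.two_pi_pos]
        linarith [hInt]
      exact h1.trans (h2.trans h3)
    -- sum at w = 1
    have hsum : HasSum (fun n => p.coeff n) (g u) := by
      have hR₀1 : (1 : NNReal) < R₀ := by
        rw [← NNReal.coe_lt_coe, hR₀R, NNReal.coe_one]
        exact hR1
      have h1mem : (1 : ℂ) ∈ Metric.eball (0 : ℂ) (R₀ : ENNReal) := by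
        rw [mem_eball_zero_iff]
        rw [show ‖(1:ℂ)‖ₑ = 1 by simp]
        exact_mod_cast hR₀1
      have := hps.hasSum h1mem
      simpa [hh, one_smul] using this
    have hc0 : p.coeff 0 = 0 := by
      have h0 := hps.coeff_zero (fun _ => (1 : ℂ))
      have : h 0 = 0 := by rw [hh]; simp [hg0]
      rw [this] at h0
      exact h0
    have hc1 : p.coeff 1 = fderiv ℂ g 0 u := by
      have hd : HasDerivAt h (fderiv ℂ g 0 u) 0 := by
        have h1 : HasDerivAt (fun z : ℂ => z • u) u 0 := by
          simpa using (hasDerivAt_id (0 : ℂ)).smul_const u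
        have h2 : HasFDerivAt g (fderiv ℂ g 0) ((0 : ℂ) • u) := by
          rw [zero_smul]
          exact (hg 0 (mem_ball_self hr)).hasFDerivAt
        exact h2.comp_hasDerivAt 0 h1
      have hder := hps.hasFPowerSeriesAt.deriv
      rw [hd.deriv] at hder
      exact hder.symm
    have htail : HasSum (fun n => p.coeff (n + 2)) (g u - fderiv ℂ g 0 u) := by
      have := (hasSum_nat_add_iff' 2).2 hsum
      simpa [Finset.sum_range_succ, hc0, hc1] using this
    have hgeo : Summable (fun n : ℕ => ρ * s ^ (n + 2)) := by
      have heq : (fun n : ℕ => ρ * s ^ (n + 2)) = fun n : ℕ => ρ * s ^ 2 * s ^ n := by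
        funext n; ring
      rw [heq]
      exact (summable_geometric_of_lt_one hs0.le hs1).mul_left _
    have hns : Summable fun n : ℕ => ‖p.coeff (n + 2)‖ :=
      Summable.of_nonneg_of_le (fun n => norm_nonneg _) (fun n => hcoeff (n + 2)) hgeo
    calc ‖g u - fderiv ℂ g 0 u‖ = ‖∑' n : ℕ, p.coeff (n + 2)‖ := by rw [htail.tsum_eq]
      _ ≤ ∑' n : ℕ, ‖p.coeff (n + 2)‖ := norm_tsum_le_tsum_norm hns
      _ ≤ ∑' n : ℕ, ρ * s ^ (n + 2) := Summable.tsum_le_tsum (fun n => hcoeff (n + 2)) hns hgeo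
      _ = ρ * s ^ 2 / (1 - s) := by
          have heq : (fun n : ℕ => ρ * s ^ (n + 2)) = fun n : ℕ => ρ * s ^ 2 * s ^ n := by
            funext n; ring
          rw [heq, tsum_mul_left, tsum_geometric_of_lt_one hs0.le hs1, div_eq_mul_inv]
  have hcont : ContinuousAt (fun s : ℝ => ρ * s ^ 2 / (1 - s)) t := by
    apply ContinuousAt.div
    · fun_prop
    · fun_prop
    · exact (sub_pos.2 ht1).ne'
  have htend : Filter.Tendsto (fun s : ℝ => ρ * s ^ 2 / (1 - s)) (nhdsWithin t (Set.Ioi t))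
      (nhds (ρ * t ^ 2 / (1 - t))) := hcont.tendsto.mono_left nhdsWithin_le_nhds
  have hev : ∀ᶠ s in nhdsWithin t (Set.Ioi t),
      ‖g u - fderiv ℂ g 0 u‖ ≤ ρ * s ^ 2 / (1 - s) :=
    Filter.eventually_of_mem (Ioo_mem_nhdsGT_of_mem ⟨le_refl t, ht1⟩) key
  exact ge_of_tendsto htend hev
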